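/- Let G be a finite bipartite graph with bipartition (L, R) in which every vertex has degree at least 1 and the maximum matching size satisfies ρ(L) = |R| < |L|. Define S_0 = ∅ and, iteratively for i ≥ 1, let B_i be a maximal set X ⊆ L \ S_{i−1} minimizing (|Γ(X ∪ S_{i−1})| − |Γ(S_{i−1})|)/|X|, and set S_i = S_{i−1} ∪ B_i, stopping at the first k with S_k = L. Then for every maxmin-fair distribution F of matchings of G, every i ∈ {1,…,k} and every u ∈ B_i, the coverage probability F[u] equals λ_i = |Γ(B_i) \ Γ(S_{i−1})| / |B_i|; moreover, every vertex w ∈ Γ(B_i) \ Γ(S_{i−1}) is matched to some vertex of B_i with probability 1 under F. -/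

import Mathlib

/-!
A finite bipartite graph with bipartition `(L, R)` is modelled by its edge set
`E : Finset (L × R)`, where `L` and `R` are finite types.  A matching is a subset of `E`
in which no two distinct edges share an endpoint.  `nbhd E S` is the set `Γ(S)` of
neighbours in `R` of a set `S ⊆ L` of left vertices.  A distribution of matchings is a
nonnegative function on `Finset (L × R)`, supported on matchings, summing to `1`;
`covP p u` is the probability that the left vertex `u` is covered by the random matching.
-/

variable {L R : Type*}

/-- `M` is a matching of the bipartite graph with edge set `E`. -/
def IsMatching [DecidableEq L] [DecidableEq R]
    (E M : Finset (L × R)) : Prop :=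
  M ⊆ E ∧ ∀ e ∈ M, ∀ f ∈ M, e ≠ f → e.1 ≠ f.1 ∧ e.2 ≠ f.2

/-- The neighbourhood `Γ(S) ⊆ R` of a set `S ⊆ L` of left vertices. -/
def nbhd [DecidableEq L] [DecidableEq R] (E : Finset (L × R)) (S : Finset L) : Finset R :=
  (E.filter (fun e => e.1 ∈ S)).image Prod.snd

/-- `p` is a probability distribution over the matchings of the graph with edge set `E`. -/
def IsDistribM [Fintype L] [Fintype R] [DecidableEq L] [DecidableEq R]
    (E : Finset (L × R)) (p : Finset (L × R) → ℝ) : Prop :=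
  (∀ M, 0 ≤ p M) ∧ (∀ M, p M ≠ 0 → IsMatching E M) ∧ (∑ M : Finset (L × R), p M) = 1

/-- The coverage (satisfaction) probability of the left vertex `u` under the
distribution of matchings `p`. -/
def covP [Fintype L] [Fintype R] [DecidableEq L] [DecidableEq R]
    (p : Finset (L × R) → ℝ) (u : L) : ℝ :=
  ∑ M : Finset (L × R), if u ∈ M.image Prod.fst then p M else 0

/-- `F` is a maxmin-fair distribution of matchings for the one-sided bipartite matching
problem (the users are the left vertices `L`). -/
def MaxminFairM [Fintype L] [Fintype R] [DecidableEq L] [DecidableEq R]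
    (E : Finset (L × R)) (F : Finset (L × R) → ℝ) : Prop :=
  IsDistribM E F ∧
    ∀ D, IsDistribM E D → ∀ u : L, covP F u < covP D u →
      ∃ v : L, covP D v < covP F v ∧ covP F v ≤ covP F u

open scoped Classical

/-- The maximum matching size `ρ(L)` of the bipartite graph with edge set `E`. -/
noncomputable def matchNum [Fintype L] [Fintype R] [DecidableEq L] [DecidableEq R]
    (E : Finset (L × R)) : ℕ :=
  ((Finset.univ : Finset (Finset (L × R))).filter (IsMatching E)).sup Finset.card

/-- `X` is a nonempty subset of `L \ S₀` minimizing the ratio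
`(|Γ(X ∪ S₀)| − |Γ(S₀)|) / |X|`. -/
def MinRatioSet [Fintype L] [Fintype R] [DecidableEq L] [DecidableEq R]
    (E : Finset (L × R)) (S₀ X : Finset L) : Prop :=
  X.Nonempty ∧ X ⊆ Finset.univ \ S₀ ∧
    ∀ Y : Finset L, Y.Nonempty → Y ⊆ Finset.univ \ S₀ →
      (((nbhd E (X ∪ S₀)).card : ℝ) - ((nbhd E S₀).card : ℝ)) / (X.card : ℝ) ≤
        (((nbhd E (Y ∪ S₀)).card : ℝ) - ((nbhd E S₀).card : ℝ)) / (Y.card : ℝ)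

section Basic
variable [DecidableEq L] [DecidableEq R] {E M : Finset (L × R)}

lemma mem_nbhd {S : Finset L} {w : R} : w ∈ nbhd E S ↔ ∃ u ∈ S, (u, w) ∈ E := by
  simp only [nbhd, Finset.mem_image, Finset.mem_filter]
  constructor
  · rintro ⟨⟨u, w'⟩, ⟨he, hu⟩, rfl⟩; exact ⟨u, hu, he⟩
  · rintro ⟨u, hu, he⟩; exact ⟨(u, w), ⟨he, hu⟩, rfl⟩

lemma nbhd_mono {S T : Finset L} (h : S ⊆ T) : nbhd E S ⊆ nbhd E T := by
  intro w hw; rw [mem_nbhd] at hw ⊢; obtain ⟨u, hu, he⟩ := hw; exact ⟨u, h hu, he⟩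

lemma nbhd_union {S T : Finset L} : nbhd E (S ∪ T) = nbhd E S ∪ nbhd E T := by
  ext w; simp only [mem_nbhd, Finset.mem_union]
  constructor
  · rintro ⟨u, hu | hu, he⟩
    · exact Or.inl ⟨u, hu, he⟩
    · exact Or.inr ⟨u, hu, he⟩
  · rintro (⟨u, hu, he⟩ | ⟨u, hu, he⟩)
    · exact ⟨u, Or.inl hu, he⟩
    · exact ⟨u, Or.inr hu, he⟩

lemma nbhd_empty : nbhd E (∅ : Finset L) = ∅ := by
  ext w; simp [mem_nbhd]

lemma nbhd_biUnion {S : Finset L} : nbhd E S = S.biUnion (fun u => nbhd E {u}) := by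
  ext w; simp only [Finset.mem_biUnion, mem_nbhd, Finset.mem_singleton]
  constructor
  · rintro ⟨u, hu, he⟩; exact ⟨u, hu, u, rfl, he⟩
  · rintro ⟨u, hu, u', rfl, he⟩; exact ⟨u', hu, he⟩

lemma nbhd_univ [Fintype L] [Fintype R] (hdegR : ∀ v : R, ∃ u : L, (u, v) ∈ E) :
    nbhd E (Finset.univ : Finset L) = Finset.univ := by
  ext w
  simp only [Finset.mem_univ, iff_true, mem_nbhd]
  obtain ⟨u, hu⟩ := hdegR w
  exact ⟨u, by simp, hu⟩

lemma fst_injOn (hM : IsMatching E M) : Set.InjOn Prod.fst (M : Set (L × R)) := by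
  intro e he f hf h
  by_contra hne
  exact ((hM.2 e he f hf hne).1) h

lemma snd_injOn (hM : IsMatching E M) : Set.InjOn Prod.snd (M : Set (L × R)) := by
  intro e he f hf h
  by_contra hne
  exact ((hM.2 e he f hf hne).2) h

/-- the set of vertices of `T` covered by `M`. -/
lemma cover_filter_eq (_hM : IsMatching E M) (T : Finset L) :
    T.filter (fun u => u ∈ M.image Prod.fst) = (M.filter (fun e => e.1 ∈ T)).image Prod.fst := by
  ext u
  simp only [Finset.mem_filter, Finset.mem_image]
  constructor
  · rintro ⟨hu, e, he, rfl⟩; exact ⟨e, ⟨he, hu⟩, rfl⟩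
  · rintro ⟨e, ⟨he, hu⟩, rfl⟩; exact ⟨hu, e, he, rfl⟩

lemma cover_count (hM : IsMatching E M) (T : Finset L) :
    (T.filter (fun u => u ∈ M.image Prod.fst)).card = (M.filter (fun e => e.1 ∈ T)).card := by
  rw [cover_filter_eq hM T]
  exact Finset.card_image_of_injOn ((fst_injOn hM).mono (Finset.filter_subset _ _))

lemma snd_image_subset_nbhd (hME : M ⊆ E) (T : Finset L) :
    (M.filter (fun e => e.1 ∈ T)).image Prod.snd ⊆ nbhd E T := by
  intro w hw
  simp only [Finset.mem_image, Finset.mem_filter] at hw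
  obtain ⟨e, ⟨he, hT⟩, rfl⟩ := hw
  exact mem_nbhd.2 ⟨e.1, hT, by exact hME he⟩

lemma matching_count_le (hM : IsMatching E M) (T : Finset L) :
    (M.filter (fun e => e.1 ∈ T)).card ≤ (nbhd E T).card := by
  rw [← Finset.card_image_of_injOn ((snd_injOn hM).mono (Finset.filter_subset _ _))]
  exact Finset.card_le_card (snd_image_subset_nbhd hM.1 T)

end Basic


section Distrib
variable [Fintype L] [Fintype R] [DecidableEq L] [DecidableEq R]
  {E : Finset (L × R)} {p : Finset (L × R) → ℝ}

lemma sum_covP_count (hp : IsDistribM E p) (T : Finset L) :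
    ∑ u ∈ T, covP p u
      = ∑ M : Finset (L × R), p M * ((M.filter (fun e => e.1 ∈ T)).card : ℝ) := by
  unfold covP
  rw [Finset.sum_comm]
  refine Finset.sum_congr rfl fun M _ => ?_
  rw [Finset.sum_ite, Finset.sum_const, Finset.sum_const_zero, add_zero, nsmul_eq_mul]
  rcases eq_or_ne (p M) 0 with h | h
  · simp [h]
  · rw [cover_count (hp.2.1 M h) T, mul_comm]

lemma sum_covP_le (hp : IsDistribM E p) (T : Finset L) :
    ∑ u ∈ T, covP p u ≤ ((nbhd E T).card : ℝ) := by
  rw [sum_covP_count hp T]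
  calc ∑ M : Finset (L × R), p M * ((M.filter (fun e => e.1 ∈ T)).card : ℝ)
      ≤ ∑ M : Finset (L × R), p M * ((nbhd E T).card : ℝ) := by
        refine Finset.sum_le_sum fun M _ => ?_
        rcases eq_or_ne (p M) 0 with h | h
        · simp [h]
        · exact mul_le_mul_of_nonneg_left
            (Nat.cast_le.2 (matching_count_le (hp.2.1 M h) T)) (hp.1 M)
    _ = ((nbhd E T).card : ℝ) := by rw [← Finset.sum_mul, hp.2.2, one_mul]

lemma saturation (hp : IsDistribM E p) (T : Finset L)
    (heq : ∑ u ∈ T, covP p u = ((nbhd E T).card : ℝ)) :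
    ∀ M, p M ≠ 0 → (M.filter (fun e => e.1 ∈ T)).image Prod.snd = nbhd E T := by
  intro M hM
  have hsum : ∑ N : Finset (L × R),
      p N * (((nbhd E T).card : ℝ) - ((N.filter (fun e => e.1 ∈ T)).card : ℝ)) = 0 := by
    have h1 := sum_covP_count hp T
    rw [heq] at h1
    have h2 := hp.2.2
    simp only [mul_sub, Finset.sum_sub_distrib, ← Finset.sum_mul]
    rw [h2, ← h1]
    ring
  have hterm : p M * (((nbhd E T).card : ℝ) - ((M.filter (fun e => e.1 ∈ T)).card : ℝ)) = 0 := by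
    have hnn : ∀ N ∈ (Finset.univ : Finset (Finset (L × R))),
        0 ≤ p N * (((nbhd E T).card : ℝ) - ((N.filter (fun e => e.1 ∈ T)).card : ℝ)) := by
      intro N _
      rcases eq_or_ne (p N) 0 with h | h
      · simp [h]
      · exact mul_nonneg (hp.1 N)
          (sub_nonneg.2 (Nat.cast_le.2 (matching_count_le (hp.2.1 N h) T)))
    exact (Finset.sum_eq_zero_iff_of_nonneg hnn).1 hsum M (Finset.mem_univ M)
  have hcnt : ((M.filter (fun e => e.1 ∈ T)).card : ℝ) = ((nbhd E T).card : ℝ) := by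
    rcases mul_eq_zero.1 hterm with h | h
    · exact absurd h hM
    · linarith
  have hMm := hp.2.1 M hM
  refine Finset.eq_of_subset_of_card_le (snd_image_subset_nbhd hMm.1 T) ?_
  rw [Finset.card_image_of_injOn ((snd_injOn hMm).mono (Finset.filter_subset _ _))]
  exact_mod_cast hcnt.ge

lemma exists_max_matching (E : Finset (L × R)) :
    ∃ M : Finset (L × R), IsMatching E M ∧ M.card = matchNum E := by
  have hne : ((Finset.univ : Finset (Finset (L × R))).filter (IsMatching E)).Nonempty := by
    refine ⟨∅, ?_⟩
    simp only [Finset.mem_filter, Finset.mem_univ, true_and]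
    exact ⟨Finset.empty_subset _, fun e he => absurd he (Finset.notMem_empty e)⟩
  obtain ⟨M, hM, hMc⟩ := Finset.exists_mem_eq_sup _ hne Finset.card
  simp only [Finset.mem_filter, Finset.mem_univ, true_and] at hM
  exact ⟨M, hM, hMc.symm⟩

/-- If the maximum matching size equals `|R|`, there is a matching covering all of `R`. -/
lemma exists_perfect_matching (hρ : matchNum E = Fintype.card R) :
    ∃ M : Finset (L × R), IsMatching E M ∧ M.image Prod.snd = Finset.univ := by
  obtain ⟨M, hM, hMc⟩ := exists_max_matching E
  refine ⟨M, hM, Finset.eq_univ_of_card _ ?_⟩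
  rw [Finset.card_image_of_injOn (snd_injOn hM), hMc, hρ]

end Distrib


section Frac
variable [Fintype L] [Fintype R] [DecidableEq L] [DecidableEq R]

lemma exists_distrib_of_fractional [Nonempty L] (E : Finset (L × R)) (x : L → R → ℝ)
    (h0 : ∀ u w, 0 ≤ x u w) (hsupp : ∀ u w, x u w ≠ 0 → (u, w) ∈ E)
    (hrow : ∀ u, ∑ w, x u w ≤ 1) (hcol : ∀ w, ∑ u, x u w = 1)
    (hLR : Fintype.card R < Fintype.card L) :
    ∃ D, IsDistribM E D ∧ ∀ u, covP D u = ∑ w, x u w := by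
  set m : ℕ := Fintype.card L - Fintype.card R with hm
  have hm0 : 0 < m := Nat.sub_pos_of_lt hLR
  have hmR : (m : ℝ) ≠ 0 := Nat.cast_ne_zero.2 hm0.ne'
  have hcard : Fintype.card (R ⊕ Fin m) = Fintype.card L := by
    simp [Fintype.card_sum, hm, Nat.add_sub_cancel' hLR.le]
  let e : (R ⊕ Fin m) ≃ L := Fintype.equivOfCardEq hcard
  set A : Matrix L L ℝ := fun u v =>
    Sum.elim (fun w => x u w) (fun _ => (1 - ∑ w, x u w) / m) (e.symm v) with hA
  have hAleft : ∀ u w, A u (e (Sum.inl w)) = x u w := by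
    intro u w; simp [hA]
  have hAmem : A ∈ doublyStochastic ℝ L := by
    rw [mem_doublyStochastic_iff_sum]
    refine ⟨fun u v => ?_, fun u => ?_, fun v => ?_⟩
    · rcases h : e.symm v with w | t
      · simpa [hA, h] using h0 u w
      · simp only [hA, h, Sum.elim_inr]
        have h1 : (0:ℝ) ≤ 1 - ∑ w, x u w := by linarith [hrow u]
        positivity
    · rw [← Equiv.sum_comp e (fun v => A u v), Fintype.sum_sum_type]
      simp only [hA, Equiv.symm_apply_apply, Sum.elim_inl, Sum.elim_inr]
      rw [Finset.sum_const, Finset.card_univ, Fintype.card_fin, nsmul_eq_mul]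
      field_simp
      ring
    · rcases h : e.symm v with w | t
      · have : ∀ u, A u v = x u w := by
          intro u; simp [hA, h]
        simp only [this]; exact hcol w
      · have : ∀ u, A u v = (1 - ∑ w, x u w) / m := by
          intro u; simp [hA, h]
        simp only [this]
        have hsum : ∑ u : L, ∑ w, x u w = Fintype.card R := by
          rw [Finset.sum_comm]
          simp [hcol, Finset.card_univ]
        rw [← Finset.sum_div, Finset.sum_sub_distrib, hsum]
        simp only [Finset.sum_const, Finset.card_univ, nsmul_eq_mul, mul_one]
        rw [div_eq_one_iff_eq hmR]
        rw [hm]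
        push_cast [Nat.cast_sub hLR.le]
        ring
  obtain ⟨c, hc0, hc1, hcA⟩ := exists_eq_sum_perm_of_mem_doublyStochastic hAmem
  have hAentry : ∀ (u v : L), A u v = ∑ σ : Equiv.Perm L, c σ * (if σ u = v then 1 else 0) := by
    intro u v
    rw [← hcA]
    simp only [Matrix.sum_apply, Matrix.smul_apply, Equiv.Perm.permMatrix,
      PEquiv.toMatrix_apply, Equiv.toPEquiv_apply, Option.mem_def, Option.some.injEq,
      smul_eq_mul]
  have hAge : ∀ (σ : Equiv.Perm L) (u : L), c σ ≤ A u (σ u) := by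
    intro σ u
    rw [hAentry u (σ u)]
    calc c σ = c σ * (if σ u = σ u then (1:ℝ) else 0) := by simp
      _ ≤ ∑ σ' : Equiv.Perm L, c σ' * (if σ' u = σ u then (1:ℝ) else 0) := by
          refine Finset.single_le_sum (f := fun σ' => c σ' * (if σ' u = σ u then (1:ℝ) else 0))
            (fun σ' _ => mul_nonneg (hc0 σ') (by split <;> norm_num)) (Finset.mem_univ σ)
  set MS : Equiv.Perm L → Finset (L × R) := fun σ =>
    Finset.univ.filter (fun pr => σ pr.1 = e (Sum.inl pr.2)) with hMS
  have hMSmem : ∀ σ (u : L) (w : R), (u, w) ∈ MS σ ↔ σ u = e (Sum.inl w) := by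
    intro σ u w; simp [hMS]
  have hmatch : ∀ σ, c σ ≠ 0 → IsMatching E (MS σ) := by
    intro σ hcσ
    constructor
    · rintro ⟨u, w⟩ hu
      rw [hMSmem] at hu
      refine hsupp u w ?_
      have h1 := hAge σ u
      rw [hu, hAleft] at h1
      have h2 := (hc0 σ).lt_of_ne' hcσ
      linarith [h0 u w]
    · rintro ⟨u, w⟩ hu ⟨u', w'⟩ hu' hne
      rw [hMSmem] at hu hu'
      constructor
      · intro h
        simp only at h
        subst h
        rw [hu] at hu'
        have : w = w' := Sum.inl.inj (e.injective hu')
        exact hne (by rw [this])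
      · intro h
        simp only at h
        subst h
        rw [← hu'] at hu
        have : u = u' := σ.injective hu
        exact hne (by rw [this])
  refine ⟨fun M => ∑ σ ∈ Finset.univ.filter (fun σ => MS σ = M), c σ, ⟨?_, ?_, ?_⟩, ?_⟩
  · intro M
    exact Finset.sum_nonneg fun σ _ => hc0 σ
  · intro M hM
    by_contra hnot
    refine hM (Finset.sum_eq_zero fun σ hσ => ?_)
    rw [Finset.mem_filter] at hσ
    by_contra hcσ
    exact hnot (hσ.2 ▸ hmatch σ hcσ)
  · rw [← hc1]
    exact Finset.sum_fiberwise_of_maps_to (fun σ _ => Finset.mem_univ _) c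
  · intro u
    unfold covP
    have hstep : ∀ M : Finset (L × R),
        (if u ∈ M.image Prod.fst then ∑ σ ∈ Finset.univ.filter (fun σ => MS σ = M), c σ else 0)
          = ∑ σ ∈ Finset.univ.filter (fun σ => MS σ = M),
              (if u ∈ (MS σ).image Prod.fst then c σ else 0) := by
      intro M
      split
      case isTrue h =>
        refine (Finset.sum_congr rfl fun σ hσ => ?_)
        rw [Finset.mem_filter] at hσ
        rw [hσ.2, if_pos h]
      case isFalse h =>
        refine (Finset.sum_eq_zero fun σ hσ => ?_).symm
        rw [Finset.mem_filter] at hσ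
        rw [hσ.2, if_neg h]
    simp only [hstep]
    rw [Finset.sum_fiberwise_of_maps_to (fun σ _ => Finset.mem_univ _)]
    have hcov : ∀ σ : Equiv.Perm L,
        (u ∈ (MS σ).image Prod.fst) ↔ ∃ w, σ u = e (Sum.inl w) := by
      intro σ
      simp only [Finset.mem_image, Prod.exists]
      constructor
      · rintro ⟨a, w, haw, rfl⟩
        rw [hMSmem] at haw
        exact ⟨w, haw⟩
      · rintro ⟨w, hw⟩
        exact ⟨u, w, (hMSmem σ u w).2 hw, rfl⟩
    have hxw : ∑ w, x u w = ∑ σ : Equiv.Perm L, (if ∃ w, σ u = e (Sum.inl w) then c σ else 0) := by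
      have h1 : ∑ w, x u w = ∑ w, A u (e (Sum.inl w)) := by
        simp [hAleft]
      rw [h1]
      simp only [hAentry]
      rw [Finset.sum_comm]
      refine Finset.sum_congr rfl fun σ _ => ?_
      rw [← Finset.mul_sum]
      rcases h : e.symm (σ u) with w0 | t
      · have hσu : σ u = e (Sum.inl w0) := by rw [← h, Equiv.apply_symm_apply]
        have : ∀ w : R, (σ u = e (Sum.inl w)) ↔ w = w0 := by
          intro w
          constructor
          · intro hw
            exact Sum.inl.inj (e.injective (hw ▸ hσu.symm)).symm
          · rintro rfl; exact hσu
        simp only [this]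
        rw [Finset.sum_ite_eq' Finset.univ w0 (fun _ => (1:ℝ))]
        simp [hσu, this]
      · have : ∀ w : R, ¬ (σ u = e (Sum.inl w)) := by
          intro w hw
          rw [← Equiv.symm_apply_eq] at hw
          rw [h] at hw
          cases hw
        simp [this]
    rw [hxw]
    refine Finset.sum_congr rfl fun σ _ => ?_
    by_cases h : ∃ w, σ u = e (Sum.inl w)
    · rw [if_pos h, if_pos ((hcov σ).2 h)]
    · rw [if_neg h, if_neg (fun hc => h ((hcov σ).1 hc))]
end Frac


section Block
variable [Fintype L] [Fintype R] [DecidableEq L] [DecidableEq R]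

lemma exists_fractional_block (E : Finset (L × R)) (Bi : Finset L) (Ni : Finset R)
    (hBne : Bi.Nonempty)
    (hkey : ∀ X : Finset L, X ⊆ Bi → X.Nonempty →
      Ni.card * X.card ≤ Bi.card * (nbhd E X ∩ Ni).card) :
    ∃ x : L → R → ℝ, (∀ u w, 0 ≤ x u w) ∧
      (∀ u w, x u w ≠ 0 → (u, w) ∈ E ∧ u ∈ Bi ∧ w ∈ Ni) ∧
      (∀ u ∈ Bi, ∑ w, x u w = (Ni.card : ℝ) / (Bi.card : ℝ)) ∧
      (∀ w ∈ Ni, ∑ u, x u w = 1) := by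
  classical
  set n := Ni.card with hn
  set b := Bi.card with hb
  have hb0 : 0 < b := Finset.card_pos.2 hBne
  have hbR : (b : ℝ) ≠ 0 := Nat.cast_ne_zero.2 hb0.ne'
  set t : (↥Bi × Fin n) → Finset (R × Fin b) :=
    fun p => (nbhd E {(p.1 : L)} ∩ Ni) ×ˢ Finset.univ with ht
  have hHall : ∀ A : Finset (↥Bi × Fin n), A.card ≤ (A.biUnion t).card := by
    intro A
    rcases A.eq_empty_or_nonempty with rfl | hAne
    · simp
    set P : Finset ↥Bi := A.image Prod.fst with hP
    set X : Finset L := P.image Subtype.val with hX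
    have hXB : X ⊆ Bi := by
      intro u hu
      simp only [hX, Finset.mem_image] at hu
      obtain ⟨p, _, rfl⟩ := hu
      exact p.2
    have hXne : X.Nonempty := by
      obtain ⟨a, ha⟩ := hAne
      exact ⟨a.1.1, Finset.mem_image.2 ⟨a.1, Finset.mem_image.2 ⟨a, ha, rfl⟩, rfl⟩⟩
    have hPX : X.card = P.card := Finset.card_image_of_injective _ Subtype.val_injective
    have hA1 : A.card ≤ P.card * n := by
      have : A ⊆ P ×ˢ Finset.univ := by
        intro a ha
        exact Finset.mem_product.2 ⟨Finset.mem_image.2 ⟨a, ha, rfl⟩, Finset.mem_univ _⟩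
      simpa [Finset.card_product] using Finset.card_le_card this
    have hbiU : A.biUnion t = (nbhd E X ∩ Ni) ×ˢ Finset.univ := by
      apply Finset.Subset.antisymm
      · intro q hq
        simp only [Finset.mem_biUnion] at hq
        obtain ⟨p, hp, hq⟩ := hq
        simp only [ht, Finset.mem_product] at hq ⊢
        refine ⟨Finset.mem_inter.2 ⟨?_, (Finset.mem_inter.1 hq.1).2⟩, Finset.mem_univ _⟩
        have := (Finset.mem_inter.1 hq.1).1
        refine nbhd_mono ?_ this
        intro z hz
        simp only [Finset.mem_singleton] at hz
        subst hz
        exact Finset.mem_image.2 ⟨p.1, Finset.mem_image.2 ⟨p, hp, rfl⟩, rfl⟩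
      · intro q hq
        simp only [Finset.mem_product, Finset.mem_inter] at hq
        obtain ⟨⟨hw1, hw2⟩, _⟩ := hq
        rw [mem_nbhd] at hw1
        obtain ⟨u, hu, he⟩ := hw1
        simp only [hX, Finset.mem_image] at hu
        obtain ⟨p, hp, rfl⟩ := hu
        simp only [hP, Finset.mem_image] at hp
        obtain ⟨a, ha, rfl⟩ := hp
        refine Finset.mem_biUnion.2 ⟨a, ha, ?_⟩
        simp only [ht, Finset.mem_product, Finset.mem_inter]
        exact ⟨⟨mem_nbhd.2 ⟨a.1.1, Finset.mem_singleton_self _, he⟩, hw2⟩, Finset.mem_univ _⟩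
    rw [hbiU, Finset.card_product, Finset.card_univ, Fintype.card_fin]
    calc A.card ≤ P.card * n := hA1
      _ = n * X.card := by rw [hPX]; ring
      _ ≤ b * (nbhd E X ∩ Ni).card := hkey X hXB hXne
      _ = (nbhd E X ∩ Ni).card * b := by ring
  obtain ⟨f, hfinj, hft⟩ := (Finset.all_card_le_biUnion_card_iff_exists_injective t).1 hHall
  have hfmem : ∀ p : ↥Bi × Fin n, (f p).1 ∈ nbhd E {(p.1 : L)} ∧ (f p).1 ∈ Ni := by
    intro p
    have := hft p
    simp only [ht, Finset.mem_product, Finset.mem_inter] at this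
    exact this.1
  have himg : Finset.univ.image f = Ni ×ˢ (Finset.univ : Finset (Fin b)) := by
    apply Finset.eq_of_subset_of_card_le
    · intro q hq
      simp only [Finset.mem_image] at hq
      obtain ⟨p, _, rfl⟩ := hq
      exact Finset.mem_product.2 ⟨(hfmem p).2, Finset.mem_univ _⟩
    · rw [Finset.card_image_of_injective _ hfinj, Finset.card_product, Finset.card_univ,
        Finset.card_univ, Fintype.card_fin, Fintype.card_prod, Fintype.card_coe,
        Fintype.card_fin]
      rw [← hb, ← hn]
      ring_nf
      exact le_refl _
  set x : L → R → ℝ := fun u w =>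
    if h : u ∈ Bi then
      ((Finset.univ.filter (fun s : Fin n => (f (⟨u, h⟩, s)).1 = w)).card : ℝ) / b
    else 0 with hx
  refine ⟨x, ?_, ?_, ?_, ?_⟩
  · intro u w
    simp only [hx]
    split
    · positivity
    · exact le_refl 0
  · intro u w hxu
    simp only [hx] at hxu
    split at hxu
    case isTrue h =>
      have hcard : (Finset.univ.filter (fun s : Fin n => (f (⟨u, h⟩, s)).1 = w)).Nonempty := by
        rw [Finset.nonempty_iff_ne_empty]
        intro hemp
        rw [hemp] at hxu
        simp at hxu
      obtain ⟨s, hs⟩ := hcard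
      simp only [Finset.mem_filter] at hs
      have h1 := (hfmem (⟨u, h⟩, s)).1
      have h2 := (hfmem (⟨u, h⟩, s)).2
      rw [hs.2] at h1 h2
      rw [mem_nbhd] at h1
      obtain ⟨u', hu', he⟩ := h1
      simp only [Finset.mem_singleton] at hu'
      subst hu'
      exact ⟨he, h, h2⟩
    case isFalse => simp at hxu
  · intro u hu
    have hrow : ∑ w : R, ((Finset.univ.filter
        (fun s : Fin n => (f (⟨u, hu⟩, s)).1 = w)).card : ℝ) = n := by
      rw [← Nat.cast_sum]
      congr 1
      have h3 := Finset.card_eq_sum_card_fiberwise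
        (f := fun s : Fin n => (f (⟨u, hu⟩, s)).1) (s := Finset.univ) (t := Finset.univ)
        (fun s _ => Finset.mem_univ _)
      rw [Finset.card_univ, Fintype.card_fin] at h3
      exact h3.symm
    calc ∑ w, x u w = ∑ w : R, ((Finset.univ.filter
          (fun s : Fin n => (f (⟨u, hu⟩, s)).1 = w)).card : ℝ) / b := by
          refine Finset.sum_congr rfl fun w _ => ?_
          simp only [hx, dif_pos hu]
      _ = (n : ℝ) / b := by rw [← Finset.sum_div, hrow]
  · intro w hw
    set Q : Finset (↥Bi × Fin n) := Finset.univ.filter (fun p => (f p).1 = w) with hQ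
    have hQcard : Q.card = b := by
      have h1 : Q.image f = ({w} : Finset R) ×ˢ (Finset.univ : Finset (Fin b)) := by
        apply Finset.Subset.antisymm
        · intro q hq
          simp only [Finset.mem_image, hQ, Finset.mem_filter] at hq
          obtain ⟨p, ⟨_, hp⟩, rfl⟩ := hq
          exact Finset.mem_product.2 ⟨Finset.mem_singleton.2 hp, Finset.mem_univ _⟩
        · intro q hq
          simp only [Finset.mem_product, Finset.mem_singleton] at hq
          have : q ∈ Finset.univ.image f := by
            rw [himg]
            exact Finset.mem_product.2 ⟨hq.1 ▸ hw, Finset.mem_univ _⟩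
          simp only [Finset.mem_image] at this
          obtain ⟨p, _, rfl⟩ := this
          refine Finset.mem_image.2 ⟨p, ?_, rfl⟩
          simp only [hQ, Finset.mem_filter]
          exact ⟨Finset.mem_univ _, hq.1⟩
      have h2 : Q.card = (Q.image f).card :=
        (Finset.card_image_of_injective _ hfinj).symm
      rw [h2, h1, Finset.card_product, Finset.card_singleton, Finset.card_univ,
        Fintype.card_fin, one_mul]
    have hQsum : ∑ p1 : ↥Bi, (Finset.univ.filter
        (fun s : Fin n => (f (p1, s)).1 = w)).card = b := by
      have h3 := Finset.card_eq_sum_card_fiberwise (f := Prod.fst) (s := Q)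
        (t := Finset.univ) (fun p _ => Finset.mem_univ p.1)
      rw [hQcard] at h3
      refine Eq.trans (Finset.sum_congr rfl fun p1 _ => ?_) h3.symm
      have himg2 : Q.filter (fun p => p.1 = p1)
          = (Finset.univ.filter (fun s : Fin n => (f (p1, s)).1 = w)).image
              (fun s => (p1, s)) := by
        ext p
        simp only [Finset.mem_filter, Finset.mem_image, hQ, Finset.mem_univ, true_and]
        constructor
        · rintro ⟨hfp, hp1⟩
          exact ⟨p.2, by rw [← hp1]; exact hfp, by rw [← hp1]⟩
        · rintro ⟨s, hs, rfl⟩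
          exact ⟨hs, rfl⟩
      rw [himg2, Finset.card_image_of_injective _ (fun s s' hss => (Prod.mk.injEq _ _ _ _ ▸ hss).2)]
    have hzero : ∀ u ∉ Bi, x u w = 0 := by
      intro u hu
      simp only [hx, dif_neg hu]
    calc ∑ u : L, x u w = ∑ u ∈ Bi, x u w := by
          rw [← Finset.sum_subset (Finset.subset_univ Bi) (fun u _ hu => hzero u hu)]
      _ = ∑ p1 : ↥Bi, x p1.1 w := (Finset.sum_coe_sort Bi (fun u => x u w)).symm
      _ = ∑ p1 : ↥Bi, ((Finset.univ.filter
            (fun s : Fin n => (f (p1, s)).1 = w)).card : ℝ) / b := by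
          refine Finset.sum_congr rfl fun p1 _ => ?_
          simp only [hx, dif_pos p1.2]
      _ = 1 := by
          rw [← Finset.sum_div, ← Nat.cast_sum, hQsum, div_self hbR]
end Block


section Ratio
variable [DecidableEq L] [DecidableEq R]

lemma ratio_num (E : Finset (L × R)) (X C : Finset L) :
    ((nbhd E (X ∪ C)).card : ℝ) - ((nbhd E C).card : ℝ)
      = ((nbhd E X \ nbhd E C).card : ℝ) := by
  rw [nbhd_union]
  have h := Finset.card_sdiff_add_card (nbhd E X) (nbhd E C)
  have h2 : (((nbhd E X \ nbhd E C).card + (nbhd E C).card : ℕ) : ℝ)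
      = ((nbhd E X ∪ nbhd E C).card : ℝ) := by rw [h]
  push_cast at h2
  linarith

end Ratio

set_option maxHeartbeats 1000000 in
/-- Fair decomposition theorem for one-sided bipartite matching.  Let `G` be a bipartite
graph with every vertex of positive degree and maximum matching size
`ρ(L) = |R| < |L|`.  Define `S 0 = ∅` and, iteratively, let `B i` be a maximal set
`X ⊆ L \ S (i-1)` minimizing `(|Γ(X ∪ S (i-1))| − |Γ(S (i-1))|) / |X|`, with
`S i = S (i-1) ∪ B i`, stopping at the first `k` with `S k = L`.  Then for every
maxmin-fair distribution `F` of matchings, every `u ∈ B i` is covered with probability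
`λ i = |Γ(B i) \ Γ(S (i-1))| / |B i|`, and every `w ∈ Γ(B i) \ Γ(S (i-1))` is matched to
some vertex of `B i` with probability `1`. -/
theorem fair_decomposition_bipartite [Fintype L] [Fintype R]
    [DecidableEq L] [DecidableEq R] [Nonempty L] [Nonempty R]
    (E : Finset (L × R))
    (hdegL : ∀ u : L, ∃ v : R, (u, v) ∈ E)
    (hdegR : ∀ v : R, ∃ u : L, (u, v) ∈ E)
    (hρ : matchNum E = Fintype.card R)
    (hLR : Fintype.card R < Fintype.card L)
    (k : ℕ) (hk : 1 ≤ k) (B S : ℕ → Finset L)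
    (hS0 : S 0 = ∅) (hSk : S k = Finset.univ)
    (hSfirst : ∀ i, 1 ≤ i → i < k → S i ≠ Finset.univ)
    (hSi : ∀ i, 1 ≤ i → i ≤ k → S i = S (i - 1) ∪ B i)
    (hBmin : ∀ i, 1 ≤ i → i ≤ k → MinRatioSet E (S (i - 1)) (B i))
    (hBmax : ∀ i, 1 ≤ i → i ≤ k →
      ∀ X : Finset L, MinRatioSet E (S (i - 1)) X → B i ⊆ X → X = B i)
    (F : Finset (L × R) → ℝ) (hF : MaxminFairM E F) :
    ∀ i, 1 ≤ i → i ≤ k →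
      (∀ u ∈ B i,
        covP F u = (((nbhd E (B i)) \ (nbhd E (S (i - 1)))).card : ℝ) / ((B i).card : ℝ)) ∧
      (∀ w ∈ (nbhd E (B i)) \ (nbhd E (S (i - 1))),
        (∑ M : Finset (L × R),
          if ∃ e ∈ M, e.2 = w ∧ e.1 ∈ B i then F M else 0) = 1) := by
  classical
  set N : ℕ → Finset R := fun i => nbhd E (B i) \ nbhd E (S (i - 1)) with hN
  set lam : ℕ → ℝ := fun i => ((N i).card : ℝ) / ((B i).card : ℝ) with hlam
  -- basic block facts
  have hBne : ∀ i, 1 ≤ i → i ≤ k → (B i).Nonempty := fun i h1 h2 => (hBmin i h1 h2).1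
  have hBcard : ∀ i, 1 ≤ i → i ≤ k → (0:ℝ) < ((B i).card : ℝ) := by
    intro i h1 h2
    exact_mod_cast Finset.card_pos.2 (hBne i h1 h2)
  have hBsub : ∀ i, 1 ≤ i → i ≤ k → ∀ u ∈ B i, u ∉ S (i - 1) := by
    intro i h1 h2 u hu
    have := (hBmin i h1 h2).2.1 hu
    exact (Finset.mem_sdiff.1 this).2
  have hBS : ∀ i, 1 ≤ i → i ≤ k → B i ⊆ S i := by
    intro i h1 h2
    rw [hSi i h1 h2]
    exact Finset.subset_union_right
  have hSmono : ∀ j, j ≤ k → ∀ i, i ≤ j → S i ⊆ S j := by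
    intro j
    induction j with
    | zero => intro _ i hi; rw [Nat.le_zero.1 hi]
    | succ j IH =>
      intro hjk i hi
      rcases Nat.lt_or_ge i (j+1) with h | h
      · have h' : i ≤ j := Nat.lt_succ_iff.1 h
        refine (IH (Nat.le_of_succ_le hjk) i h').trans ?_
        have := hSi (j+1) (Nat.succ_le_succ (Nat.zero_le j)) hjk
        rw [Nat.add_sub_cancel] at this
        rw [this]
        exact Finset.subset_union_left
      · have : i = j + 1 := le_antisymm hi h
        rw [this]
  -- ratio inequality in convenient form
  have hratio : ∀ i, 1 ≤ i → i ≤ k → ∀ Y : Finset L, Y.Nonempty →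
      Y ⊆ Finset.univ \ S (i - 1) →
      lam i ≤ ((nbhd E Y \ nbhd E (S (i - 1))).card : ℝ) / (Y.card : ℝ) := by
    intro i h1 h2 Y hYne hYsub
    have h := (hBmin i h1 h2).2.2 Y hYne hYsub
    rw [ratio_num, ratio_num] at h
    exact h
  -- N i = nbhd (S i) \ nbhd (S (i-1))
  have hnbhdS : ∀ i, 1 ≤ i → i ≤ k →
      nbhd E (S i) = nbhd E (S (i - 1)) ∪ nbhd E (B i) := by
    intro i h1 h2
    rw [hSi i h1 h2, nbhd_union]
  have hNS : ∀ i, 1 ≤ i → i ≤ k → N i = nbhd E (S i) \ nbhd E (S (i - 1)) := by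
    intro i h1 h2
    rw [hnbhdS i h1 h2, hN]
    ext w
    simp only [Finset.mem_sdiff, Finset.mem_union]
    tauto
  have hnbhdS' : ∀ i, 1 ≤ i → i ≤ k →
      nbhd E (S i) = nbhd E (S (i - 1)) ∪ N i := by
    intro i h1 h2
    rw [hNS i h1 h2, hnbhdS i h1 h2]
    ext w
    simp only [Finset.mem_union, Finset.mem_sdiff]
    tauto
  -- S as a union of blocks
  have hSunion : ∀ i, i ≤ k → S i = (Finset.Icc 1 i).biUnion B := by
    intro i
    induction i with
    | zero => intro _; simp [hS0]
    | succ i IH =>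
      intro hik
      have hIcc : Finset.Icc 1 (i+1) = insert (i+1) (Finset.Icc 1 i) := by
        ext j; simp only [Finset.mem_Icc, Finset.mem_insert]; omega
      have h := hSi (i+1) (Nat.succ_le_succ (Nat.zero_le i)) hik
      rw [Nat.add_sub_cancel] at h
      rw [h, IH (Nat.le_of_succ_le hik), hIcc, Finset.biUnion_insert]
      ext u
      simp only [Finset.mem_union]
      tauto
  -- nbhd S as union of N's
  have hNunion : ∀ i, i ≤ k → nbhd E (S i) = (Finset.Icc 1 i).biUnion N := by
    intro i
    induction i with
    | zero => intro _; simp [hS0, nbhd_empty]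
    | succ i IH =>
      intro hik
      have hIcc : Finset.Icc 1 (i+1) = insert (i+1) (Finset.Icc 1 i) := by
        ext j; simp only [Finset.mem_Icc, Finset.mem_insert]; omega
      have h := hnbhdS' (i+1) (Nat.succ_le_succ (Nat.zero_le i)) hik
      rw [Nat.add_sub_cancel] at h
      rw [h, IH (Nat.le_of_succ_le hik), hIcc, Finset.biUnion_insert]
      ext u
      simp only [Finset.mem_union]
      tauto
  -- disjointness
  have hBdisj' : ∀ i j, 1 ≤ i → i < j → j ≤ k → Disjoint (B i) (B j) := by
    intro i j h1 hij hjk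
    rw [Finset.disjoint_left]
    intro u hui huj
    refine hBsub j (le_trans h1 hij.le) hjk u huj ?_
    have h1' : B i ⊆ S i := hBS i h1 (le_trans hij.le hjk)
    have h2' : S i ⊆ S (j - 1) := hSmono (j-1) (by omega) i (by omega)
    exact h2' (h1' hui)
  have hNdisj' : ∀ i j, 1 ≤ i → i < j → j ≤ k → Disjoint (N i) (N j) := by
    intro i j h1 hij hjk
    rw [Finset.disjoint_left]
    intro w hwi hwj
    rw [hNS j (by omega) hjk] at hwj
    refine (Finset.mem_sdiff.1 hwj).2 ?_
    have h1' : N i ⊆ nbhd E (S i) := by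
      rw [hNS i h1 (by omega)]; exact Finset.sdiff_subset
    have h2' : S i ⊆ S (j - 1) := hSmono (j-1) (by omega) i (by omega)
    exact nbhd_mono h2' (h1' hwi)
  have hBdisj : ∀ i ∈ Finset.Icc 1 k, ∀ j ∈ Finset.Icc 1 k, i ≠ j → Disjoint (B i) (B j) := by
    intro i hi j hj hij
    simp only [Finset.mem_Icc] at hi hj
    rcases Nat.lt_or_ge i j with h | h
    · exact hBdisj' i j hi.1 h hj.2
    · exact (hBdisj' j i hj.1 (by omega) hi.2).symm
  have hNdisj : ∀ i ∈ Finset.Icc 1 k, ∀ j ∈ Finset.Icc 1 k, i ≠ j → Disjoint (N i) (N j) := by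
    intro i hi j hj hij
    simp only [Finset.mem_Icc] at hi hj
    rcases Nat.lt_or_ge i j with h | h
    · exact hNdisj' i j hi.1 h hj.2
    · exact (hNdisj' j i hj.1 (by omega) hi.2).symm
  -- key Hall-type inequality within a block
  have hkey : ∀ i, 1 ≤ i → i ≤ k → ∀ X : Finset L, X ⊆ B i → X.Nonempty →
      (N i).card * X.card ≤ (B i).card * (nbhd E X ∩ N i).card := by
    intro i h1 h2 X hXB hXne
    have hXsub : X ⊆ Finset.univ \ S (i - 1) := hXB.trans (hBmin i h1 h2).2.1
    have h := hratio i h1 h2 X hXne hXsub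
    have hinter : nbhd E X ∩ N i = nbhd E X \ nbhd E (S (i - 1)) := by
      rw [hN]
      ext w
      simp only [Finset.mem_inter, Finset.mem_sdiff]
      constructor
      · rintro ⟨hw1, hw2, hw3⟩; exact ⟨hw1, hw3⟩
      · rintro ⟨hw1, hw2⟩; exact ⟨hw1, nbhd_mono hXB hw1, hw2⟩
    rw [← hinter] at h
    have hX0 : (0:ℝ) < (X.card : ℝ) := by exact_mod_cast Finset.card_pos.2 hXne
    have hB0 : (0:ℝ) < ((B i).card : ℝ) := hBcard i h1 h2
    rw [hlam] at h
    rw [div_le_div_iff₀ hB0 hX0] at h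
    have h' : ((N i).card : ℝ) * (X.card : ℝ)
        ≤ ((B i).card : ℝ) * ((nbhd E X ∩ N i).card : ℝ) := by linarith
    exact_mod_cast h'
  -- lam i ≤ 1
  obtain ⟨M0, hM0, hM0univ⟩ := exists_perfect_matching (E := E) hρ
  have hlam1 : ∀ i, 1 ≤ i → i ≤ k → lam i ≤ 1 := by
    intro i h1 h2
    set Rrem : Finset R := Finset.univ \ nbhd E (S (i - 1)) with hRrem
    rcases Rrem.eq_empty_or_nonempty with hre | hrne
    · have : N i = ∅ := by
        rw [hN]
        rw [Finset.eq_empty_iff_forall_notMem]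
        intro w hw
        rw [Finset.mem_sdiff] at hw
        have : w ∈ Rrem := by
          rw [hRrem, Finset.mem_sdiff]
          exact ⟨Finset.mem_univ _, hw.2⟩
        rw [hre] at this
        exact Finset.notMem_empty _ this
      simp only [hlam]
      simp only [this, Finset.card_empty, Nat.cast_zero, zero_div]
      norm_num
    · set Y : Finset L := (M0.filter (fun e => e.2 ∈ Rrem)).image Prod.fst with hY
      have hfiltcard : (M0.filter (fun e => e.2 ∈ Rrem)).card = Rrem.card := by
        have himg : (M0.filter (fun e => e.2 ∈ Rrem)).image Prod.snd = Rrem := by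
          apply Finset.Subset.antisymm
          · intro w hw
            simp only [Finset.mem_image, Finset.mem_filter] at hw
            obtain ⟨e, ⟨_, he⟩, rfl⟩ := hw
            exact he
          · intro w hw
            have : w ∈ M0.image Prod.snd := by rw [hM0univ]; exact Finset.mem_univ _
            simp only [Finset.mem_image] at this
            obtain ⟨e, he, rfl⟩ := this
            exact Finset.mem_image.2 ⟨e, Finset.mem_filter.2 ⟨he, hw⟩, rfl⟩
        have hci := Finset.card_image_of_injOn
          ((snd_injOn hM0).mono (Finset.filter_subset (fun e => e.2 ∈ Rrem) M0))
        rw [himg] at hci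
        exact hci.symm
      have hYcard : Y.card = Rrem.card := by
        rw [hY, Finset.card_image_of_injOn
          ((fst_injOn hM0).mono (Finset.filter_subset _ _)), hfiltcard]
      have hYsub : Y ⊆ Finset.univ \ S (i - 1) := by
        intro u hu
        simp only [hY, Finset.mem_image, Finset.mem_filter] at hu
        obtain ⟨e, ⟨heM, hew⟩, rfl⟩ := hu
        rw [Finset.mem_sdiff]
        refine ⟨Finset.mem_univ _, fun hmem => ?_⟩
        have : e.2 ∈ nbhd E (S (i - 1)) := mem_nbhd.2 ⟨e.1, hmem, by
          have := hM0.1 heM; rwa [← Prod.mk.eta (p := e)] at this⟩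
        rw [hRrem, Finset.mem_sdiff] at hew
        exact hew.2 this
      have hYne : Y.Nonempty := by
        rw [← Finset.card_pos, hYcard, Finset.card_pos]
        exact hrne
      have h := hratio i h1 h2 Y hYne hYsub
      refine h.trans ?_
      have hsub2 : nbhd E Y \ nbhd E (S (i - 1)) ⊆ Rrem := by
        intro w hw
        rw [Finset.mem_sdiff] at hw
        rw [hRrem, Finset.mem_sdiff]
        exact ⟨Finset.mem_univ _, hw.2⟩
      have hc := Finset.card_le_card hsub2
      have hY0 : (0:ℝ) < (Y.card : ℝ) := by exact_mod_cast Finset.card_pos.2 hYne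
      rw [div_le_one hY0]
      rw [hYcard]
      exact_mod_cast hc
  -- monotonicity of lam
  have hlamstep : ∀ i, 1 ≤ i → i + 1 ≤ k → lam i ≤ lam (i + 1) := by
    intro i h1 h2
    set Y : Finset L := B i ∪ B (i + 1) with hY
    have hd : Disjoint (B i) (B (i + 1)) := hBdisj' i (i+1) h1 (Nat.lt_succ_self i) h2
    have hYne : Y.Nonempty := Finset.Nonempty.mono Finset.subset_union_left (hBne i h1 (by omega))
    have hYsub : Y ⊆ Finset.univ \ S (i - 1) := by
      rw [hY, Finset.union_subset_iff]
      refine ⟨(hBmin i h1 (by omega)).2.1, ?_⟩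
      intro u hu
      have h3 := (hBmin (i+1) (by omega) h2).2.1 hu
      rw [Nat.add_sub_cancel] at h3
      rw [Finset.mem_sdiff] at h3 ⊢
      exact ⟨Finset.mem_univ _, fun hmem => h3.2 (hSmono i (by omega) (i-1) (by omega) hmem)⟩
    have h := hratio i h1 (by omega) Y hYne hYsub
    have hNY : nbhd E Y \ nbhd E (S (i - 1)) = N i ∪ N (i + 1) := by
      have hNi1 : N (i+1) = nbhd E (B (i+1)) \ nbhd E (S i) := by
        rw [hN]; simp only [Nat.add_sub_cancel]
      have hSnb : nbhd E (S i) = nbhd E (S (i-1)) ∪ nbhd E (B i) :=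
        hnbhdS i h1 (by omega)
      have hNi0 : N i = nbhd E (B i) \ nbhd E (S (i - 1)) := by rw [hN]
      rw [hY, nbhd_union, hNi0, hNi1, hSnb]
      ext w
      simp only [Finset.mem_sdiff, Finset.mem_union]
      tauto
    have hdN : Disjoint (N i) (N (i + 1)) := hNdisj' i (i+1) h1 (Nat.lt_succ_self i) h2
    have hcardY : (Y.card : ℝ) = ((B i).card : ℝ) + ((B (i+1)).card : ℝ) := by
      rw [hY]
      rw [Finset.card_union_of_disjoint hd]
      push_cast
      ring
    have hcardN : ((nbhd E Y \ nbhd E (S (i - 1))).card : ℝ)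
        = ((N i).card : ℝ) + ((N (i+1)).card : ℝ) := by
      rw [hNY, Finset.card_union_of_disjoint hdN]
      push_cast
      ring
    rw [hcardN, hcardY] at h
    have hB1 : (0:ℝ) < ((B i).card : ℝ) := hBcard i h1 (by omega)
    have hB2 : (0:ℝ) < ((B (i+1)).card : ℝ) := hBcard (i+1) (by omega) h2
    rw [hlam] at h ⊢
    rw [div_le_div_iff₀ hB1 (by linarith)] at h
    rw [div_le_div_iff₀ hB1 hB2]
    nlinarith [h]
  have hlammono : ∀ i j, 1 ≤ i → i ≤ j → j ≤ k → lam i ≤ lam j := by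
    intro i j h1 hij
    induction j with
    | zero => omega
    | succ j IH =>
      intro hjk
      rcases Nat.lt_or_ge i (j+1) with h | h
      · have h' : i ≤ j := by omega
        exact (IH h' (by omega)).trans (hlamstep j (by omega) hjk)
      · have : i = j + 1 := by omega
        rw [this]
  -- per-block fractional matchings
  have hxi : ∀ i, 1 ≤ i → i ≤ k → ∃ xi : L → R → ℝ, (∀ u w, 0 ≤ xi u w) ∧
      (∀ u w, xi u w ≠ 0 → (u, w) ∈ E ∧ u ∈ B i ∧ w ∈ N i) ∧
      (∀ u ∈ B i, ∑ w, xi u w = ((N i).card : ℝ) / ((B i).card : ℝ)) ∧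
      (∀ w ∈ N i, ∑ u, xi u w = 1) := by
    intro i h1 h2
    exact exists_fractional_block E (B i) (N i) (hBne i h1 h2)
      (fun X hX hXne => hkey i h1 h2 X hX hXne)
  choose xi hxi0 hxisupp hxirow hxicol using hxi
  set XX : ℕ → L → R → ℝ :=
    fun i => if h : 1 ≤ i ∧ i ≤ k then xi i h.1 h.2 else fun _ _ => 0 with hXX
  have hXX0 : ∀ i u w, 0 ≤ XX i u w := by
    intro i u w
    simp only [hXX]
    split
    case isTrue h => exact hxi0 i h.1 h.2 u w
    case isFalse => exact le_refl 0
  have hXXsupp : ∀ i u w, XX i u w ≠ 0 → (u, w) ∈ E ∧ u ∈ B i ∧ w ∈ N i := by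
    intro i u w hne
    simp only [hXX] at hne
    split at hne
    case isTrue h => exact hxisupp i h.1 h.2 u w hne
    case isFalse => exact absurd rfl hne
  set x : L → R → ℝ := fun u w => ∑ i ∈ Finset.Icc 1 k, XX i u w with hx
  have hx0 : ∀ u w, 0 ≤ x u w := by
    intro u w
    exact Finset.sum_nonneg fun i _ => hXX0 i u w
  have hxsupp : ∀ u w, x u w ≠ 0 → (u, w) ∈ E := by
    intro u w hne
    simp only [hx] at hne
    obtain ⟨i, _, hi⟩ := Finset.exists_ne_zero_of_sum_ne_zero hne
    exact (hXXsupp i u w hi).1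
  have hblkL : ∀ u : L, ∃ i0, i0 ∈ Finset.Icc 1 k ∧ u ∈ B i0 := by
    intro u
    have : u ∈ S k := by rw [hSk]; exact Finset.mem_univ u
    rw [hSunion k (le_refl k)] at this
    obtain ⟨i0, hi0, hu⟩ := Finset.mem_biUnion.1 this
    exact ⟨i0, hi0, hu⟩
  have hblkR : ∀ w : R, ∃ i0, i0 ∈ Finset.Icc 1 k ∧ w ∈ N i0 := by
    intro w
    have : w ∈ nbhd E (S k) := by
      rw [hSk, nbhd_univ hdegR]; exact Finset.mem_univ w
    rw [hNunion k (le_refl k)] at this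
    obtain ⟨i0, hi0, hw⟩ := Finset.mem_biUnion.1 this
    exact ⟨i0, hi0, hw⟩
  have hxrow : ∀ i, 1 ≤ i → i ≤ k → ∀ u ∈ B i, ∑ w, x u w = lam i := by
    intro i h1 h2 u hu
    simp only [hx]
    rw [Finset.sum_comm]
    rw [Finset.sum_eq_single_of_mem i (Finset.mem_Icc.2 ⟨h1, h2⟩)]
    · have hXXi : XX i = xi i h1 h2 := by
        simp only [hXX]; rw [dif_pos ⟨h1, h2⟩]
      rw [hXXi]
      rw [hxirow i h1 h2 u hu]
    · intro j hj hji
      refine Finset.sum_eq_zero fun w _ => ?_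
      by_contra hne
      have := (hXXsupp j u w hne).2.1
      exact (Finset.disjoint_left.1 (hBdisj j hj i (Finset.mem_Icc.2 ⟨h1, h2⟩) hji)) this hu
  have hxcol : ∀ w : R, ∑ u, x u w = 1 := by
    intro w
    obtain ⟨i0, hi0, hw⟩ := hblkR w
    simp only [hx]
    rw [Finset.sum_comm]
    rw [Finset.sum_eq_single_of_mem i0 hi0]
    · have hi01 := (Finset.mem_Icc.1 hi0).1
      have hi02 := (Finset.mem_Icc.1 hi0).2
      have hXXi : XX i0 = xi i0 hi01 hi02 := by
        simp only [hXX]; rw [dif_pos ⟨hi01, hi02⟩]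
      rw [hXXi]
      exact hxicol i0 hi01 hi02 w hw
    · intro j hj hji
      refine Finset.sum_eq_zero fun u _ => ?_
      by_contra hne
      have := (hXXsupp j u w hne).2.2
      exact (Finset.disjoint_left.1 (hNdisj j hj i0 hi0 hji)) this hw
  have hxrowle : ∀ u : L, ∑ w, x u w ≤ 1 := by
    intro u
    obtain ⟨i0, hi0, hu⟩ := hblkL u
    rw [Finset.mem_Icc] at hi0
    rw [hxrow i0 hi0.1 hi0.2 u hu]
    exact hlam1 i0 hi0.1 hi0.2
  obtain ⟨D, hDdist, hDcov⟩ :=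
    exists_distrib_of_fractional E x hx0 hxsupp hxrowle hxcol hLR
  have hDlam : ∀ i, 1 ≤ i → i ≤ k → ∀ u ∈ B i, covP D u = lam i := by
    intro i h1 h2 u hu
    rw [hDcov u, hxrow i h1 h2 u hu]
  have hIccsub : ∀ i, i ≤ k → Finset.Icc 1 i ⊆ Finset.Icc 1 k := by
    intro i hik j hj
    rw [Finset.mem_Icc] at hj ⊢
    omega
  have hpd : ∀ i, i ≤ k → Set.PairwiseDisjoint ↑(Finset.Icc 1 i) B := by
    intro i hik a ha b hb hab
    exact hBdisj a (hIccsub i hik (Finset.mem_coe.1 ha)) b (hIccsub i hik (Finset.mem_coe.1 hb)) hab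
  have hcardNS : ∀ i, i ≤ k →
      ((nbhd E (S i)).card : ℝ) = ∑ j ∈ Finset.Icc 1 i, ((N j).card : ℝ) := by
    intro i hik
    rw [hNunion i hik, Finset.card_biUnion (fun a ha b hb hab =>
      hNdisj a (hIccsub i hik ha) b (hIccsub i hik hb) hab)]
    push_cast
    rfl
  have hNlam : ∀ i, 1 ≤ i → i ≤ k → ((B i).card : ℝ) * lam i = ((N i).card : ℝ) := by
    intro i h1 h2
    have hBi := hBcard i h1 h2
    simp only [hlam]
    rw [mul_comm, div_mul_cancel₀ _ (ne_of_gt hBi)]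
  have main : ∀ i, 1 ≤ i → i ≤ k → ∀ u ∈ B i, covP F u = lam i := by
    intro i
    induction i using Nat.strong_induction_on with
    | _ i IH =>
      intro h1 h2
      have hge : ∀ v ∈ B i, lam i ≤ covP F v := by
        intro v hv
        by_contra hlt
        push_neg at hlt
        have hDv : covP F v < covP D v := by
          rw [hDlam i h1 h2 v hv]; exact hlt
        obtain ⟨v', hv'1, hv'2⟩ := hF.2 D hDdist v hDv
        obtain ⟨j, hj, hv'B⟩ := hblkL v'
        rw [Finset.mem_Icc] at hj
        rw [hDlam j hj.1 hj.2 v' hv'B] at hv'1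
        have hji : j < i := by
          by_contra hge'
          push_neg at hge'
          have := hlammono i j h1 hge' hj.2
          linarith
        have := IH j hji hj.1 (by omega) v' hv'B
        linarith
      have hsum : ∑ v ∈ B i, covP F v ≤ ((N i).card : ℝ) := by
        have hle := sum_covP_le hF.1 (S i)
        have hsplit : ∑ u ∈ S i, covP F u = ∑ j ∈ Finset.Icc 1 i, ∑ v ∈ B j, covP F v := by
          rw [hSunion i h2]
          exact Finset.sum_biUnion (hpd i h2)
        have hIcc : Finset.Icc 1 i = insert i (Finset.Icc 1 (i-1)) := by
          ext j
          simp only [Finset.mem_Icc, Finset.mem_insert]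
          omega
        have hnotmem : i ∉ Finset.Icc 1 (i-1) := by
          simp only [Finset.mem_Icc]
          omega
        have hprev : ∀ j ∈ Finset.Icc 1 (i-1), ∑ v ∈ B j, covP F v = ((N j).card : ℝ) := by
          intro j hj
          rw [Finset.mem_Icc] at hj
          have hji : j < i := by omega
          have heach : ∀ v ∈ B j, covP F v = lam j := IH j hji hj.1 (by omega)
          rw [Finset.sum_congr rfl heach, Finset.sum_const, nsmul_eq_mul]
          exact hNlam j hj.1 (by omega)
        have hprevsum : ∑ j ∈ Finset.Icc 1 (i-1), ∑ v ∈ B j, covP F v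
            = ∑ j ∈ Finset.Icc 1 (i-1), ((N j).card : ℝ) :=
          Finset.sum_congr rfl hprev
        rw [hsplit, hIcc, Finset.sum_insert hnotmem, hcardNS i h2, hIcc,
          Finset.sum_insert hnotmem] at hle
        linarith
      intro u hu
      by_contra hne
      have hlt : lam i < covP F u := lt_of_le_of_ne (hge u hu) (Ne.symm hne)
      have hstrict : ∑ v ∈ B i, lam i < ∑ v ∈ B i, covP F v :=
        Finset.sum_lt_sum (fun v hv => hge v hv) ⟨u, hu, hlt⟩
      rw [Finset.sum_const, nsmul_eq_mul] at hstrict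
      have := hNlam i h1 h2
      linarith
  have hblocksum : ∀ j, 1 ≤ j → j ≤ k → ∑ v ∈ B j, covP F v = ((N j).card : ℝ) := by
    intro j h1 h2
    rw [Finset.sum_congr rfl (main j h1 h2), Finset.sum_const, nsmul_eq_mul]
    exact hNlam j h1 h2
  have hsat : ∀ i, 1 ≤ i → i ≤ k → ∀ M, F M ≠ 0 →
      (M.filter (fun e => e.1 ∈ S i)).image Prod.snd = nbhd E (S i) := by
    intro i h1 h2
    refine saturation hF.1 (S i) ?_
    rw [hcardNS i h2, hSunion i h2, Finset.sum_biUnion (hpd i h2)]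
    refine Finset.sum_congr rfl fun j hj => ?_
    rw [Finset.mem_Icc] at hj
    exact hblocksum j hj.1 (by omega)
  intro i h1 h2
  constructor
  · intro u hu
    have := main i h1 h2 u hu
    rw [this]
  · intro w hw
    have hwN : w ∈ N i := by
      simp only [hN]
      exact hw
    have hwS : w ∈ nbhd E (S i) ∧ w ∉ nbhd E (S (i-1)) := by
      have := hNS i h1 h2
      rw [this] at hwN
      exact Finset.mem_sdiff.1 hwN
    rw [← hF.1.2.2]
    refine Finset.sum_congr rfl fun M _ => ?_
    rcases eq_or_ne (F M) 0 with h0 | h0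
    · rw [h0]
      split <;> rfl
    · rw [if_pos]
      have hsatM := hsat i h1 h2 M h0
      have : w ∈ (M.filter (fun e => e.1 ∈ S i)).image Prod.snd := by
        rw [hsatM]
        exact hwS.1
      simp only [Finset.mem_image, Finset.mem_filter] at this
      obtain ⟨e, ⟨heM, heS⟩, hew⟩ := this
      refine ⟨e, heM, hew, ?_⟩
      have hSi' := hSi i h1 h2
      rw [hSi'] at heS
      rcases Finset.mem_union.1 heS with h | h
      · exfalso
        refine hwS.2 ?_
        refine mem_nbhd.2 ⟨e.1, h, ?_⟩
        have heE : e ∈ E := (hF.1.2.1 M h0).1 heM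
        rw [← hew]
        rwa [← Prod.mk.eta (p := e)] at heE
      · exact h
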